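/- Let R be a finite ring and let p₁,...,p_n be the distinct primes dividing |R|, and k ≥ 1. Then the number of (k+1)-potent elements of R satisfies |{x ∈ R : x^{k+1} = x}| ≤ ((k+1)^n / (p₁·p₂·…·p_n)) · |R|^{2k/(k+1)}. -/

import Mathlib

private lemma fiber_card_le {α β : Type*} [Fintype α] [Fintype β] [DecidableEq β]
    (f : α → β) (n : ℕ) (h : ∀ b, (Finset.univ.filter fun a => f a = b).card ≤ n) :
    Fintype.card α ≤ n * Fintype.card β :=
  calc Fintype.card α ≤ n * (Finset.univ.image f).card :=
        Finset.card_le_mul_card_image _ n (fun b _ => h b)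
  _ ≤ n * Fintype.card β := Nat.mul_le_mul_left n (Finset.card_le_univ _)

private lemma card_pot_congr {A B : Type*} [Ring A] [Ring B] (e : A ≃+* B) (m : ℕ) :
    Nat.card {x : A // x ^ m = x} = Nat.card {x : B // x ^ m = x} :=
  Nat.card_congr <| e.toEquiv.subtypeEquiv fun a => by
    rw [show e.toEquiv a = e a from rfl, ← map_pow]
    exact ⟨fun h => by rw [h], fun h => e.injective h⟩

private lemma card_pot_prod (A B : Type*) [Ring A] [Ring B] (m : ℕ) :
    Nat.card {x : A × B // x ^ m = x}
      = Nat.card {a : A // a ^ m = a} * Nat.card {b : B // b ^ m = b} := by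
  rw [← Nat.card_prod]
  apply Nat.card_congr
  refine
  { toFun := fun x => (⟨x.1.1, ?_⟩, ⟨x.1.2, ?_⟩)
    invFun := fun p => ⟨(p.1.1, p.2.1), ?_⟩
    left_inv := fun x => rfl
    right_inv := fun p => rfl }
  · rw [← Prod.pow_fst]; exact congrArg Prod.fst x.2
  · rw [← Prod.pow_snd]; exact congrArg Prod.snd x.2
  · exact Prod.ext (by rw [Prod.pow_fst]; exact p.1.2) (by rw [Prod.pow_snd]; exact p.2.2)


private lemma card_pot_surj {R S : Type*} [Ring R] [Ring S] [Fintype R] [Fintype S]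
    (f : R →+* S) (hf : Function.Surjective f) (m : ℕ) :
    Fintype.card S * Nat.card {x : R // x ^ m = x}
      ≤ Nat.card {s : S // s ^ m = s} * Fintype.card R := by
  classical
  set K := f.toAddMonoidHom.ker with hK
  have hsurj : Function.Surjective f.toAddMonoidHom := hf
  have h1 : Nat.card R = Nat.card S * Nat.card K := by
    rw [AddSubgroup.card_eq_card_quotient_mul_card_addSubgroup K]
    congr 1
    exact Nat.card_congr (QuotientAddGroup.quotientKerEquivOfSurjective _ hsurj).toEquiv
  have h3 : Nat.card {x : R // x ^ m = x} ≤ Nat.card {s : S // s ^ m = s} * Nat.card K := by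
    rw [← Nat.card_prod]
    apply Nat.card_le_card_of_injective
      (f := fun x : {x : R // x ^ m = x} =>
        ((⟨f x.1, by rw [← map_pow, x.2]⟩ : {s : S // s ^ m = s}),
         (⟨x.1 - Function.surjInv hf (f x.1), by
            rw [AddMonoidHom.mem_ker]
            show f _ = 0
            rw [map_sub, Function.surjInv_eq hf, sub_self]⟩ : K)))
    intro x y h
    have h1' : f x.1 = f y.1 := congrArg Subtype.val (congrArg Prod.fst h)
    have h2' : x.1 - Function.surjInv hf (f x.1) = y.1 - Function.surjInv hf (f y.1) :=
      congrArg Subtype.val (congrArg Prod.snd h)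
    rw [h1'] at h2'
    exact Subtype.ext (sub_left_injective h2')
  have h1' : Fintype.card R = Fintype.card S * Nat.card K := by
    simpa [Nat.card_eq_fintype_card] using h1
  calc Fintype.card S * Nat.card {x : R // x ^ m = x}
      ≤ Fintype.card S * (Nat.card {s : S // s ^ m = s} * Nat.card K) :=
        Nat.mul_le_mul_left _ h3
    _ = Nat.card {s : S // s ^ m = s} * (Fintype.card S * Nat.card K) := by ring
    _ = Nat.card {s : S // s ^ m = s} * Fintype.card R := by rw [← h1']

private lemma card_dvd_of_surj {R S : Type*} [Ring R] [Ring S] [Fintype R] [Fintype S]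
    (f : R →+* S) (hf : Function.Surjective f) :
    Fintype.card S ∣ Fintype.card R := by
  classical
  have hsurj : Function.Surjective f.toAddMonoidHom := hf
  have h1 : Nat.card R = Nat.card S * Nat.card f.toAddMonoidHom.ker := by
    rw [AddSubgroup.card_eq_card_quotient_mul_card_addSubgroup f.toAddMonoidHom.ker]
    congr 1
    exact Nat.card_congr (QuotientAddGroup.quotientKerEquivOfSurjective _ hsurj).toEquiv
  exact ⟨Nat.card f.toAddMonoidHom.ker, by simpa [Nat.card_eq_fintype_card] using h1⟩

section
variable {R : Type} [Ring R]

private lemma central_inv (hsimp : ∀ c : RingCon R, (∀ x y, c x y → x = y) ∨ (∀ x y, c x y))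
    {z : R} (hz : z ∈ Subring.center R) (hz0 : z ≠ 0) :
    ∃ t, t ∈ Subring.center R ∧ z * t = 1 ∧ t * z = 1 := by
  have hzc : ∀ g : R, g * z = z * g := fun g => Subring.mem_center_iff.mp hz g
  set c : RingCon R :=
    { r := fun x y => ∃ t, x - y = z * t
      iseqv := ⟨fun x => ⟨0, by simp⟩,
        fun {x y} h => by
          obtain ⟨t, ht⟩ := h
          exact ⟨-t, by rw [mul_neg, ← ht]; abel⟩,
        fun {x y w} h h' => by
          obtain ⟨t, ht⟩ := h; obtain ⟨s, hs⟩ := h'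
          exact ⟨t + s, by rw [mul_add, ← ht, ← hs]; abel⟩⟩
      add' := by
        rintro a b a' b' ⟨t, ht⟩ ⟨s, hs⟩
        exact ⟨t + s, by rw [mul_add, ← ht, ← hs]; abel⟩
      mul' := by
        rintro a b a' b' ⟨t, ht⟩ ⟨s, hs⟩
        refine ⟨t * a' + b * s, ?_⟩
        rw [show a * a' - b * b' = (a - b) * a' + b * (a' - b') by noncomm_ring, ht, hs,
          mul_assoc, ← mul_assoc b z s, hzc b, mul_assoc, ← mul_add] } with hc
  rcases hsimp c with h | h
  · exact absurd (by simpa using h z 0 ⟨1, by simp⟩) hz0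
  · obtain ⟨t, ht⟩ : ∃ t, (1 : R) - 0 = z * t := h 1 0
    rw [sub_zero] at ht
    have hzt : z * t = 1 := ht.symm
    have hinj : ∀ x : R, z * x = 0 → x = 0 := by
      intro x hx
      calc x = x * (z * t) := by rw [hzt, mul_one]
        _ = (z * x) * t := by rw [← mul_assoc, hzc x]
        _ = 0 := by rw [hx, zero_mul]
    have htz : t * z = 1 := by
      have h0 : z * (t * z - 1) = 0 := by
        rw [mul_sub, ← mul_assoc, hzt, one_mul, mul_one, sub_self]
      exact sub_eq_zero.mp (hinj _ h0)
    refine ⟨t, Subring.mem_center_iff.mpr fun g => ?_, hzt, htz⟩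
    have h0 : z * (g * t - t * g) = 0 := by
      have e1 : z * (g * t) = g := by
        rw [← mul_assoc, ← hzc g, mul_assoc, hzt, mul_one]
      have e2 : z * (t * g) = g := by
        rw [← mul_assoc, hzt, one_mul]
      rw [mul_sub, e1, e2, sub_self]
    exact sub_eq_zero.mp (hinj _ h0)

private lemma central_mul_inj
    (hsimp : ∀ c : RingCon R, (∀ x y, c x y → x = y) ∨ (∀ x y, c x y))
    {z : R} (hz : z ∈ Subring.center R) (hz0 : z ≠ 0) {x : R} (hx : z * x = 0) : x = 0 := by
  obtain ⟨t, -, hzt, -⟩ := central_inv hsimp hz hz0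
  calc x = x * (z * t) := by rw [hzt, mul_one]
    _ = (z * x) * t := by rw [← mul_assoc, Subring.mem_center_iff.mp hz x]
    _ = 0 := by rw [hx, zero_mul]

private lemma center_isField [Nontrivial R]
    (hsimp : ∀ c : RingCon R, (∀ x y, c x y → x = y) ∨ (∀ x y, c x y)) :
    IsField (Subring.center R) := by
  refine ⟨⟨0, 1, fun h => zero_ne_one (congrArg Subtype.val h)⟩, mul_comm, ?_⟩
  rintro ⟨a, ha⟩ h0
  have ha0 : a ≠ 0 := fun h => h0 (Subtype.ext h)
  obtain ⟨t, htc, hzt, -⟩ := central_inv hsimp ha ha0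
  exact ⟨⟨t, htc⟩, Subtype.ext hzt⟩

end

private lemma card_ne_aux {α : Type*} [Fintype α] [DecidableEq α] (a : α) :
    Fintype.card {x : α // x ≠ a} = Fintype.card α - 1 := by
  have : Fintype.card {x : α // ¬ (x = a)} = Fintype.card α - Fintype.card {x : α // x = a} :=
    Fintype.card_subtype_compl _
  rw [Fintype.card_subtype_eq] at this
  exact this

set_option maxHeartbeats 2000000 in
private lemma simple_case (R : Type) [Ring R] [Fintype R] (k p : ℕ) (hk : 1 ≤ k)
    (hp : p.Prime) (hpN : p ∣ Fintype.card R)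
    (honly : ∀ q : ℕ, q.Prime → q ∣ Fintype.card R → q = p)
    (hkp : k + 1 < p)
    (hsimp : ∀ c : RingCon R, (∀ x y, c x y → x = y) ∨ (∀ x y, c x y)) :
    p * Nat.card {x : R // x ^ (k + 1) = x} ≤ (k + 1) * Fintype.card R := by
  classical
  set N := Fintype.card R with hN
  have hN0 : 0 < N := Fintype.card_pos
  have hNp : p ≤ N := Nat.le_of_dvd hN0 hpN
  have hnontriv : Nontrivial R := Fintype.one_lt_card_iff_nontrivial.mp
    (lt_of_lt_of_le hp.one_lt hNp)
  set F := Subring.center R with hF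
  letI : Field F := (center_isField hsimp).toField
  set q := Fintype.card F with hq
  have hq1 : 1 < q := Fintype.one_lt_card
  -- q divides N
  have hqN : q ∣ N := by
    have e : Nat.card F = Nat.card (Subring.center R).toAddSubgroup :=
      Nat.card_congr (Equiv.subtypeEquivRight (fun x => Iff.rfl))
    have := AddSubgroup.card_addSubgroup_dvd_card (Subring.center R).toAddSubgroup
    rw [← e] at this
    simpa [Nat.card_eq_fintype_card] using this
  have hpq : p ≤ q := by
    have hr : q.minFac = p := honly q.minFac (Nat.minFac_prime (by omega)) ((Nat.minFac_dvd q).trans hqN)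
    calc p = q.minFac := hr.symm
      _ ≤ q := Nat.minFac_le (by omega)
  have hqle : q ≤ N := Fintype.card_le_of_injective _ Subtype.val_injective
  set T := Nat.card {x : R // x ^ (k + 1) = x} with hT
  have hzeroT : (0:R) ^ (k+1) = 0 := zero_pow (by omega)
  have hne : Nonempty {x : R // x ^ (k + 1) = x} := ⟨⟨0, hzeroT⟩⟩
  have hT1 : 1 ≤ T := Nat.card_pos
  have hTN : T ≤ N := by
    rw [hT, Nat.card_eq_fintype_card]
    exact Fintype.card_le_of_injective _ Subtype.val_injective
  -- the root-counting bound in the field F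
  have hroots : Fintype.card {w : F // w ^ k = 1} ≤ k := by
    have h2 : Fintype.card {w : F // w ^ k = 1} ≤ (Polynomial.nthRoots k (1:F)).toFinset.card := by
      rw [← Fintype.card_coe]
      apply Fintype.card_le_of_injective (fun w =>
        (⟨w.1, by rw [Multiset.mem_toFinset, Polynomial.mem_nthRoots (by omega : 0 < k)]
                  exact w.2⟩ : ((Polynomial.nthRoots k (1:F)).toFinset : Finset F)))
      intro a b h
      have h' := congrArg Subtype.val h
      exact Subtype.ext h'
    exact h2.trans ((Multiset.toFinset_card_le _).trans (Polynomial.card_nthRoots k 1))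
  -- main fiber count
  set A := ({z : F // z ≠ 0} × {x : R // x ^ (k+1) = x ∧ x ≠ 0}) with hA
  have hval_ne : ∀ z : {z : F // z ≠ 0}, (z.1 : R) ≠ 0 := by
    intro z h
    exact z.2 (Subtype.ext h)
  have hPhi : ∀ a : A, (a.1.1 : R) * a.2.1 ≠ 0 := by
    intro a h
    exact a.2.2.2 (central_mul_inj hsimp a.1.1.2 (hval_ne a.1) h)
  set Phi : A → {y : R // y ≠ 0} := fun a => ⟨(a.1.1 : R) * a.2.1, hPhi a⟩ with hPhiDef
  -- key computation
  have keylem : ∀ (ζ₀ : F), ζ₀ ≠ 0 → ∀ (ζ : F), ζ ≠ 0 → ∀ x₀ x : R,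
      x₀ ^ (k+1) = x₀ → x ^ (k+1) = x → x ≠ 0 →
      (ζ : R) * x = (ζ₀ : R) * x₀ → (ζ₀⁻¹ * ζ) ^ k = 1 := by
    intro ζ₀ hζ₀ ζ hζ x₀ x hx₀T hxT hx0 heq
    set w : F := ζ₀⁻¹ * ζ with hw
    have hx₀ : x₀ = (w : R) * x := by
      have h1 : ((ζ₀⁻¹ : F) : R) * ((ζ : R) * x) = ((ζ₀⁻¹ : F) : R) * ((ζ₀ : R) * x₀) := by
        rw [heq]
      rw [← mul_assoc, ← mul_assoc] at h1
      have c1 : ((ζ₀⁻¹ : F) : R) * (ζ : R) = ((w : F) : R) := by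
        push_cast
        rfl
      have c2 : ((ζ₀⁻¹ : F) : R) * (ζ₀ : R) = 1 := by
        have : (ζ₀⁻¹ : F) * ζ₀ = 1 := inv_mul_cancel₀ hζ₀
        calc ((ζ₀⁻¹ : F) : R) * (ζ₀ : R) = ((ζ₀⁻¹ * ζ₀ : F) : R) := by push_cast; ring
          _ = 1 := by rw [this]; push_cast; ring
      rw [c1, c2, one_mul] at h1
      exact h1.symm
    have hcomm : Commute ((w : F) : R) x := (Subring.mem_center_iff.mp w.2 x).symm
    have hstep : ((w : R)) ^ (k+1) * x = (w : R) * x := by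
      have h2 := hx₀T
      rw [hx₀, hcomm.mul_pow, hxT] at h2
      exact h2
    have hker : (((w ^ (k+1) - w : F) : R)) * x = 0 := by
      push_cast
      rw [sub_mul, hstep, sub_self]
    have hw0 : w ≠ 0 := mul_ne_zero (inv_ne_zero hζ₀) hζ
    have hwk : w ^ (k+1) - w = 0 := by
      by_contra hne3
      have hmem : ((w ^ (k+1) - w : F) : R) ∈ Subring.center R := (w ^ (k+1) - w : F).2
      have hnz : ((w ^ (k+1) - w : F) : R) ≠ 0 := fun h => hne3 (Subtype.ext h)
      exact hx0 (central_mul_inj hsimp hmem hnz hker)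
    have e3 : w ^ (k+1) = w := sub_eq_zero.mp hwk
    have e4 : w ^ k * w = 1 * w := by rw [← pow_succ, e3, one_mul]
    exact mul_right_cancel₀ hw0 e4
  have hfiber : ∀ b : {y : R // y ≠ 0}, (Finset.univ.filter fun a : A => Phi a = b).card ≤ k := by
    intro b
    rw [← Fintype.card_subtype]
    by_cases hne2 : Nonempty {a : A // Phi a = b}
    · obtain ⟨a₀⟩ := hne2
      set ζ₀ : F := a₀.1.1.1 with hz₀
      have hζ₀0 : ζ₀ ≠ 0 := a₀.1.1.2
      have key : ∀ a : {a : A // Phi a = b}, (ζ₀⁻¹ * a.1.1.1) ^ k = 1 := by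
        intro a
        refine keylem ζ₀ hζ₀0 a.1.1.1 a.1.1.2 a₀.1.2.1 a.1.2.1 a₀.1.2.2.1 a.1.2.2.1 a.1.2.2.2 ?_
        exact congrArg Subtype.val (a.2.trans a₀.2.symm)
      have hinj : Function.Injective
          (fun a : {a : A // Phi a = b} => (⟨ζ₀⁻¹ * a.1.1.1, key a⟩ : {w : F // w ^ k = 1})) := by
        intro a a' h
        have h1 : ζ₀⁻¹ * a.1.1.1 = ζ₀⁻¹ * a'.1.1.1 := congrArg Subtype.val h
        have hzeq : a.1.1.1 = a'.1.1.1 := mul_left_cancel₀ (inv_ne_zero hζ₀0) h1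
        have hxeq : a.1.2.1 = a'.1.2.1 := by
          have e1 : (a.1.1.1 : R) * a.1.2.1 = (a'.1.1.1 : R) * a'.1.2.1 :=
            congrArg Subtype.val (a.2.trans a'.2.symm)
          rw [← hzeq] at e1
          have e2 : (a.1.1.1 : R) * (a.1.2.1 - a'.1.2.1) = 0 := by
            rw [mul_sub, e1, sub_self]
          exact sub_eq_zero.mp (central_mul_inj hsimp a.1.1.1.2 (hval_ne a.1.1) e2)
        apply Subtype.ext
        apply Prod.ext
        · exact Subtype.ext hzeq
        · exact Subtype.ext hxeq
      exact (Fintype.card_le_of_injective _ hinj).trans hroots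
    · rw [Fintype.card_eq_zero_iff.mpr (not_nonempty_iff.mp hne2)]
      omega
  have hcount : Fintype.card A ≤ k * Fintype.card {y : R // y ≠ 0} :=
    fiber_card_le Phi k hfiber
  have cB : Fintype.card {y : R // y ≠ 0} = N - 1 := card_ne_aux 0
  have cZ : Fintype.card {z : F // z ≠ 0} = q - 1 := card_ne_aux 0
  have cX : Fintype.card {x : R // x ^ (k+1) = x ∧ x ≠ 0} = T - 1 := by
    have e2 : {x : R // x ^ (k+1) = x ∧ x ≠ 0}
        ≃ {y : {x : R // x ^ (k+1) = x} // y ≠ ⟨0, hzeroT⟩} :=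
      { toFun := fun x => ⟨⟨x.1, x.2.1⟩, fun h => x.2.2 (congrArg Subtype.val h)⟩
        invFun := fun y => ⟨y.1.1, y.1.2, fun h => y.2 (Subtype.ext h)⟩
        left_inv := fun x => rfl
        right_inv := fun y => rfl }
    rw [Fintype.card_congr e2, card_ne_aux, hT, Nat.card_eq_fintype_card]
  have cA : Fintype.card A = (q - 1) * (T - 1) := by
    have e3 : Fintype.card A
        = Fintype.card ({z : F // z ≠ 0} × {x : R // x ^ (k+1) = x ∧ x ≠ 0}) :=
      Fintype.card_congr (Equiv.cast hA)
    rw [e3, Fintype.card_prod, cZ, cX]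
  have main : (q - 1) * (T - 1) ≤ k * (N - 1) := by
    rw [← cA, ← cB]; exact hcount
  -- final arithmetic
  zify [show 1 ≤ q from by omega, show 1 ≤ T from hT1, show 1 ≤ N from hN0] at main
  have e1 : (q:ℤ) * (((q:ℤ)-1) * ((T:ℤ)-1)) ≤ (q:ℤ) * ((k:ℤ) * ((N:ℤ)-1)) :=
    mul_le_mul_of_nonneg_left main (by positivity)
  have e2 : (0:ℤ) ≤ ((N:ℤ) - q) * ((q:ℤ) - k - 1) := by
    apply mul_nonneg
    · have : (q:ℤ) ≤ (N:ℤ) := by exact_mod_cast hqle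
      linarith
    · have : ((k:ℤ)+1) < (p:ℤ) := by exact_mod_cast hkp
      have : (p:ℤ) ≤ (q:ℤ) := by exact_mod_cast hpq
      have hkp' : ((k:ℤ)+1) < (p:ℤ) := by exact_mod_cast hkp
      linarith
  have idid : ((q:ℤ)-1) * (((k:ℤ)+1)*N - q*T)
      = ((q:ℤ) * ((k:ℤ) * ((N:ℤ)-1)) - (q:ℤ) * (((q:ℤ)-1) * ((T:ℤ)-1)))
        + ((N:ℤ)-q) * ((q:ℤ)-k-1) := by ring
  have h5 : 0 ≤ ((q:ℤ)-1) * (((k:ℤ)+1)*N - q*T) := by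
    rw [idid]; linarith [e1, e2]
  have h6 : 0 ≤ ((k:ℤ)+1)*N - q*T := by
    by_contra hcon
    push_neg at hcon
    have hq1' : (1:ℤ) < (q:ℤ)  := by exact_mod_cast hq1
    nlinarith [h5]
  have h7 : (p:ℤ) * T ≤ (q:ℤ) * T := by
    apply mul_le_mul_of_nonneg_right
    · exact_mod_cast hpq
    · positivity
  zify
  linarith [h6, h7]


set_option maxHeartbeats 1000000 in
private lemma lemA (k : ℕ) (hk : 1 ≤ k) :
    ∀ n : ℕ, ∀ (R : Type) [Ring R] [Fintype R], Fintype.card R = n →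
      ∀ p : ℕ, p.Prime → p ∣ n → (∀ q, q.Prime → q ∣ n → q = p) →
      p * Nat.card {x : R // x ^ (k + 1) = x} ≤ (k + 1) * n := by
  intro n
  induction n using Nat.strong_induction_on with
  | _ n IH =>
  intro R _ _ hcard p hp hpn honly
  classical
  have hn0 : 0 < n := hcard ▸ Fintype.card_pos
  have hTN : Nat.card {x : R // x ^ (k + 1) = x} ≤ n := by
    rw [Nat.card_eq_fintype_card, ← hcard]
    exact Fintype.card_le_of_injective _ Subtype.val_injective
  by_cases hpk : p ≤ k + 1
  · exact Nat.mul_le_mul hpk hTN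
  · push_neg at hpk
    by_cases hs : ∀ c : RingCon R, (∀ x y, c x y → x = y) ∨ (∀ x y, c x y)
    · subst hcard
      exact simple_case R k p hk hp hpn honly hpk hs
    · push_neg at hs
      obtain ⟨c, hc1, hc2⟩ := hs
      obtain ⟨x, y, hxy, hxney⟩ := hc1
      obtain ⟨x', y', hnxy⟩ := hc2
      set S := c.Quotient with hS
      letI : Finite S := Quotient.finite _
      letI : Fintype S := Fintype.ofFinite S
      have hsurj : Function.Surjective c.mk' := fun a =>
        Quotient.inductionOn' a (fun z => ⟨z, rfl⟩)
      have hlt : Fintype.card S < n := by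
        rw [← hcard]
        exact Fintype.card_lt_of_surjective_not_injective c.mk' hsurj
          (fun hinj => hxney (hinj (c.eq.mpr hxy)))
      have hnt : Nontrivial S := ⟨⟨c.mk' x', c.mk' y', fun h => hnxy (c.eq.mp h)⟩⟩
      have h1S : 1 < Fintype.card S := Fintype.one_lt_card_iff_nontrivial.mpr hnt
      have hdvd : Fintype.card S ∣ n := hcard ▸ card_dvd_of_surj c.mk' hsurj
      have honly' : ∀ q, q.Prime → q ∣ Fintype.card S → q = p := fun q hq hqd =>
        honly q hq (hqd.trans hdvd)
      have hpS : p ∣ Fintype.card S := by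
        have h := honly' (Fintype.card S).minFac (Nat.minFac_prime (by omega)) (Nat.minFac_dvd _)
        rw [← h]
        exact Nat.minFac_dvd _
      have hIH := IH (Fintype.card S) hlt S rfl p hp hpS honly'
      have hcps := card_pot_surj c.mk' hsurj (k+1)
      rw [hcard] at hcps
      have hfin : Fintype.card S * (p * Nat.card {x : R // x ^ (k + 1) = x})
          ≤ Fintype.card S * ((k + 1) * n) := by
        calc Fintype.card S * (p * Nat.card {x : R // x ^ (k + 1) = x})
            = p * (Fintype.card S * Nat.card {x : R // x ^ (k + 1) = x}) := by ring
          _ ≤ p * (Nat.card {s : S // s ^ (k+1) = s} * n) := Nat.mul_le_mul_left _ hcps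
          _ = (p * Nat.card {s : S // s ^ (k+1) = s}) * n := by ring
          _ ≤ ((k + 1) * Fintype.card S) * n := Nat.mul_le_mul_right _ hIH
          _ = Fintype.card S * ((k + 1) * n) := by ring
      exact Nat.le_of_mul_le_mul_left hfin (by omega)


private def mulCon {R : Type} [Ring R] (c : R) (hcen : ∀ g : R, g * c = c * g) : RingCon R where
  r x y := c * x = c * y
  iseqv := ⟨fun _ => rfl, Eq.symm, Eq.trans⟩
  add' {a b a' b'} h h' := by
    have h1 : c * a = c * b := h
    have h2 : c * a' = c * b' := h'
    show c * (a + a') = c * (b + b')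
    rw [mul_add, mul_add, h1, h2]
  mul' {a b a' b'} h h' := by
    have h1 : c * a = c * b := h
    have h2 : c * a' = c * b' := h'
    show c * (a * a') = c * (b * b')
    rw [← mul_assoc, h1, ← hcen b, mul_assoc, h2, ← mul_assoc, hcen b, mul_assoc]

private lemma mulCon_rel {R : Type} [Ring R] (c : R) (hcen : ∀ g : R, g * c = c * g)
    (x y : R) : (mulCon c hcen) x y ↔ c * x = c * y := Iff.rfl

private lemma mulCon_mk'_surj {R : Type} [Ring R] (c : R) (hcen : ∀ g : R, g * c = c * g) :
    Function.Surjective (mulCon c hcen).mk' := fun a =>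
  Quotient.inductionOn' a (fun z => ⟨z, rfl⟩)

private lemma quot_nsmul_zero {R : Type} [Ring R] (c : R) (hcen : ∀ g : R, g * c = c * g)
    (nn : ℕ) (h : nn • c = 0) : ∀ x : (mulCon c hcen).Quotient, nn • x = 0 := by
  intro x
  refine Quotient.inductionOn' x (fun z => ?_)
  have h2 : ((mulCon c hcen).mk') (nn • z) = nn • ((mulCon c hcen).mk' z) := map_nsmul _ _ _
  have h3 : (Quotient.mk'' z : (mulCon c hcen).Quotient) = (mulCon c hcen).mk' z := rfl
  rw [h3, ← h2]
  show ((mulCon c hcen).mk' (nn • z)) = ((mulCon c hcen).mk' 0)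
  apply (mulCon c hcen).eq.mpr
  show c * (nn • z) = c * 0
  rw [mul_zero, mul_smul_comm, ← smul_mul_assoc, h, zero_mul]

private lemma split_equiv {R : Type} [Ring R] (c : R) (hcen : ∀ g : R, g * c = c * g)
    (hcen2 : ∀ g : R, g * (1 - c) = (1 - c) * g) (hid : c * c = c) :
    Function.Bijective ⇑((mulCon c hcen).mk'.prod ((mulCon (1-c) hcen2).mk')) := by
  have hzero1 : c * (1 - c) = 0 := by rw [mul_sub, mul_one, hid, sub_self]
  have hzero2 : (1 - c) * c = 0 := by rw [sub_mul, one_mul, hid, sub_self]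
  have hidem2 : (1 - c) * (1 - c) = (1 - c) := by rw [sub_mul, one_mul, hzero1, sub_zero]
  constructor
  · intro u v h
    have h1 : (mulCon c hcen).mk' u = (mulCon c hcen).mk' v := congrArg Prod.fst h
    have h2 : (mulCon (1-c) hcen2).mk' u = (mulCon (1-c) hcen2).mk' v := congrArg Prod.snd h
    have e1 : c * u = c * v := (mulCon c hcen).eq.mp h1
    have e2 : (1-c) * u = (1-c) * v := (mulCon (1-c) hcen2).eq.mp h2
    calc u = c*u + (1-c)*u := by noncomm_ring
      _ = c*v + (1-c)*v := by rw [e1, e2]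
      _ = v := by noncomm_ring
  · rintro ⟨a, b⟩
    obtain ⟨x, rfl⟩ := mulCon_mk'_surj c hcen a
    obtain ⟨y, rfl⟩ := mulCon_mk'_surj (1-c) hcen2 b
    refine ⟨c*x + (1-c)*y, Prod.ext ?_ ?_⟩
    · show (mulCon c hcen).mk' _ = _
      apply (mulCon c hcen).eq.mpr
      show c * (c*x + (1-c)*y) = c * x
      rw [mul_add, ← mul_assoc, hid, ← mul_assoc, hzero1, zero_mul, add_zero]
    · show (mulCon (1-c) hcen2).mk' _ = _
      apply (mulCon (1-c) hcen2).eq.mpr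
      show (1-c) * (c*x + (1-c)*y) = (1-c) * y
      rw [mul_add, ← mul_assoc, hzero2, zero_mul, zero_add, ← mul_assoc, hidem2]


set_option maxHeartbeats 1000000 in
private lemma mainN (k : ℕ) (hk : 1 ≤ k) :
    ∀ n : ℕ, ∀ (R : Type) [Ring R] [Fintype R], Fintype.card R = n →
      (∏ p ∈ n.primeFactors, p) * Nat.card {x : R // x ^ (k + 1) = x}
        ≤ (k + 1) ^ n.primeFactors.card * n := by
  intro n
  induction n using Nat.strong_induction_on with
  | _ n IH =>
  intro R _ _ hcard
  classical
  have hn0 : 0 < n := hcard ▸ Fintype.card_pos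
  by_cases h1 : n = 1
  · subst h1
    have hsub : Subsingleton R := Fintype.card_le_one_iff_subsingleton.mp (by omega)
    have hT1 : Nat.card {x : R // x ^ (k + 1) = x} = 1 := by
      apply Nat.card_eq_one_iff_unique.mpr
      constructor
      · infer_instance
      · exact ⟨⟨0, by rw [zero_pow (by omega : k + 1 ≠ 0)]⟩⟩
    have hpf1 : (1:ℕ).primeFactors = ∅ := by simp
    simp only [hpf1, Finset.prod_empty, Finset.card_empty, pow_zero, one_mul, mul_one, hT1]
    exact le_refl 1
  · set p := n.minFac with hpdef
    have hp : p.Prime := Nat.minFac_prime h1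
    have hpn : p ∣ n := Nat.minFac_dvd n
    by_cases hone : ∀ q, q.Prime → q ∣ n → q = p
    · have hpf : n.primeFactors = {p} := by
        apply Finset.eq_singleton_iff_unique_mem.mpr
        constructor
        · exact Nat.mem_primeFactors.mpr ⟨hp, hpn, by omega⟩
        · intro q hq
          exact hone q (Nat.prime_of_mem_primeFactors hq) (Nat.dvd_of_mem_primeFactors hq)
      rw [hpf, Finset.prod_singleton, Finset.card_singleton, pow_one]
      exact lemA k hk n R hcard p hp hpn hone
    · push_neg at hone
      obtain ⟨q0, hq0p, hq0d, hq0ne⟩ := hone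
      set a := n.factorization p with hadef
      have ha : 0 < a := Nat.Prime.factorization_pos_of_dvd hp (by omega) hpn
      set P := p ^ a with hPdef
      set m := n / P with hmdef
      have hPm : P * m = n := Nat.ordProj_mul_ordCompl_eq_self n p
      have hcopm : Nat.Coprime p m := Nat.coprime_ordCompl hp (by omega)
      have hpnm : ¬ p ∣ m := Nat.Prime.coprime_iff_not_dvd hp |>.mp hcopm
      have hcop : Nat.Coprime P m := Nat.Coprime.pow_left a hcopm
      -- Bezout
      set A := Int.gcdA (P : ℤ) (m : ℤ) with hAdef
      set B := Int.gcdB (P : ℤ) (m : ℤ) with hBdef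
      have hbez : (P:ℤ) * A + (m:ℤ) * B = 1 := by
        have h2 := Int.gcd_eq_gcd_ab (P:ℤ) (m:ℤ)
        have h3 : Int.gcd (P:ℤ) (m:ℤ) = 1 := by
          rw [Int.gcd_natCast_natCast]
          exact hcop
        rw [h3] at h2
        exact_mod_cast h2.symm
      -- the central idempotent
      set cE : R := (((m:ℤ) * B : ℤ) : R) with hcE
      have hcen : ∀ g : R, g * cE = cE * g := fun g => (Int.cast_commute ((m:ℤ) * B) g).eq.symm
      have hcen2 : ∀ g : R, g * (1 - cE) = (1 - cE) * g := fun g => by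
        rw [mul_sub, sub_mul, mul_one, one_mul, hcen g]
      have hNcast : ((n:ℕ) : R) = 0 := by
        rw [← nsmul_one, ← hcard]
        exact card_nsmul_eq_zero
      have hPmR : ((P:ℕ):R) * ((m:ℕ):R) = 0 := by
        rw [← Nat.cast_mul, hPm, hNcast]
      have hnZ : (P:ℤ) * (m:ℤ) = (n:ℤ) := by exact_mod_cast hPm
      have hid : cE * cE = cE := by
        have key : ((m:ℤ)*B) * ((m:ℤ)*B) = (m:ℤ)*B - (A*B) * (n:ℤ) := by
          linear_combination ((m:ℤ)*B) * hbez - (A*B) * hnZ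
        have e1 : cE * cE = ((((m:ℤ)*B) * ((m:ℤ)*B) : ℤ) : R) := by
          rw [hcE]; norm_cast
        rw [e1, key, hcE]
        push_cast [hNcast]
        rw [mul_zero, sub_zero]
      have hPc : (P:ℕ) • cE = 0 := by
        rw [nsmul_eq_mul, hcE, Int.cast_mul, Int.cast_natCast, ← mul_assoc, hPmR, zero_mul]
      have hmc : (m:ℕ) • ((1:R) - cE) = 0 := by
        have e : (1:ℤ) - (m:ℤ)*B = (P:ℤ)*A := by linarith [hbez]
        have h1mc : (1:R) - cE = (((P:ℤ) * A : ℤ) : R) := by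
          calc (1:R) - cE = (((1 - (m:ℤ)*B) : ℤ) : R) := by
                rw [hcE]; norm_cast
            _ = (((P:ℤ)*A : ℤ) : R) := by rw [e]
        rw [nsmul_eq_mul, h1mc]
        have e2 : ((m:ℕ):R) * (((P:ℤ)*A : ℤ) : R) = (((P:ℕ):R) * ((m:ℕ):R)) * ((A:ℤ):R) := by
          rw [Int.cast_mul, Int.cast_natCast, ← mul_assoc, (Nat.cast_commute m (((P:ℕ)):R)).eq]
        rw [e2, hPmR, zero_mul]
      -- the two quotient rings
      set Q1 := (mulCon cE hcen).Quotient with hQ1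
      set Q2 := (mulCon (1-cE) hcen2).Quotient with hQ2
      letI : Finite Q1 := Quotient.finite _
      letI : Finite Q2 := Quotient.finite _
      letI : Fintype Q1 := Fintype.ofFinite _
      letI : Fintype Q2 := Fintype.ofFinite _
      have hbij := split_equiv cE hcen hcen2 hid
      set e4 : R ≃+* Q1 × Q2 := RingEquiv.ofBijective _ hbij with he4
      set n1 := Fintype.card Q1 with hn1
      set n2 := Fintype.card Q2 with hn2
      have hmul : n1 * n2 = n := by
        rw [← hcard, Fintype.card_congr e4.toEquiv, Fintype.card_prod, hn1, hn2]
      have hprime1 : ∀ q, q.Prime → q ∣ n1 → q = p := by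
        intro q hq hqd
        haveI : Fact q.Prime := ⟨hq⟩
        obtain ⟨x, hx⟩ := exists_prime_addOrderOf_dvd_card (G := Q1) q (by rwa [← hn1])
        have hPx : (P:ℕ) • x = 0 := quot_nsmul_zero cE hcen P hPc x
        have h5 : addOrderOf x ∣ P := addOrderOf_dvd_of_nsmul_eq_zero hPx
        rw [hx, hPdef] at h5
        exact (Nat.prime_dvd_prime_iff_eq hq hp).mp (hq.dvd_of_dvd_pow h5)
      have hdvd2 : ∀ q, q.Prime → q ∣ n2 → q ∣ m := by
        intro q hq hqd
        haveI : Fact q.Prime := ⟨hq⟩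
        obtain ⟨x, hx⟩ := exists_prime_addOrderOf_dvd_card (G := Q2) q (by rwa [← hn2])
        have hmx : (m:ℕ) • x = 0 := quot_nsmul_zero (1-cE) hcen2 m hmc x
        have h5 : addOrderOf x ∣ m := addOrderOf_dvd_of_nsmul_eq_zero hmx
        rwa [hx] at h5
      have hn1pos : 0 < n1 := Fintype.card_pos
      have hn2pos : 0 < n2 := Fintype.card_pos
      have hn2gt : 1 < n2 := by
        rcases Nat.lt_or_ge n2 2 with h | h
        · exfalso
          have hn2eq : n2 = 1 := by omega
          have h7 : n1 = n := by rw [← hmul, hn2eq, mul_one]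
          exact hq0ne (hprime1 q0 hq0p (by rwa [h7]))
        · omega
      have hn1gt : 1 < n1 := by
        rcases Nat.lt_or_ge n1 2 with h | h
        · exfalso
          have hn1eq : n1 = 1 := by omega
          have h7 : n2 = n := by rw [← hmul, hn1eq, one_mul]
          exact hpnm (hdvd2 p hp (by rwa [h7]))
        · omega
      have hlt1 : n1 < n := by nlinarith
      have hlt2 : n2 < n := by nlinarith
      have hIH1 := IH n1 hlt1 Q1 rfl
      have hIH2 := IH n2 hlt2 Q2 rfl
      have hpf : n.primeFactors = n1.primeFactors ∪ n2.primeFactors := by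
        rw [← hmul]
        exact Nat.primeFactors_mul (by omega) (by omega)
      have hdisj : Disjoint n1.primeFactors n2.primeFactors := by
        rw [Finset.disjoint_left]
        intro q hq1 hq2
        have hqp : q = p :=
          hprime1 q (Nat.prime_of_mem_primeFactors hq1) (Nat.dvd_of_mem_primeFactors hq1)
        exact hpnm (hqp ▸ hdvd2 q (Nat.prime_of_mem_primeFactors hq2)
          (Nat.dvd_of_mem_primeFactors hq2))
      have hTsplit : Nat.card {x : R // x ^ (k+1) = x}
          = Nat.card {u : Q1 // u^(k+1) = u} * Nat.card {v : Q2 // v^(k+1) = v} := by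
        rw [card_pot_congr e4 (k+1), card_pot_prod]
      rw [hpf, Finset.prod_union hdisj, Finset.card_union_of_disjoint hdisj, pow_add,
        ← hmul, hTsplit]
      calc (∏ q ∈ n1.primeFactors, q) * (∏ q ∈ n2.primeFactors, q)
            * (Nat.card {u : Q1 // u^(k+1) = u} * Nat.card {v : Q2 // v^(k+1) = v})
          = ((∏ q ∈ n1.primeFactors, q) * Nat.card {u : Q1 // u^(k+1) = u})
            * ((∏ q ∈ n2.primeFactors, q) * Nat.card {v : Q2 // v^(k+1) = v}) := by ring
        _ ≤ ((k+1) ^ n1.primeFactors.card * n1) * ((k+1) ^ n2.primeFactors.card * n2) :=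
            Nat.mul_le_mul hIH1 hIH2
        _ = (k+1) ^ n1.primeFactors.card * (k+1) ^ n2.primeFactors.card * (n1 * n2) := by ring


/-- For a finite ring `R` with distinct prime divisors `p₁, …, p_n` of `|R|`, the
number of `(k+1)`-potent elements of `R` is at most
`((k+1)^n / (p₁ ⋯ p_n)) · |R|^{2k/(k+1)}`. -/
theorem stmt_16 (R : Type) [Ring R] [Fintype R] (k : ℕ) (hk : 1 ≤ k) :
    (Nat.card {x : R // x ^ (k + 1) = x} : ℝ) ≤
      ((k + 1 : ℝ) ^ (Fintype.card R).primeFactors.card /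
          ∏ p ∈ (Fintype.card R).primeFactors, (p : ℝ)) *
        (Fintype.card R : ℝ) ^ ((2 * (k : ℝ)) / (k + 1)) := by
  have hmain := mainN k hk (Fintype.card R) R rfl
  set n := Fintype.card R with hn
  set T := Nat.card {x : R // x ^ (k+1) = x} with hT
  have hn0 : 0 < n := Fintype.card_pos
  have hProd_pos : (0:ℝ) < ∏ p ∈ n.primeFactors, (p:ℝ) :=
    Finset.prod_pos (fun p hp => by exact_mod_cast (Nat.prime_of_mem_primeFactors hp).pos)
  have hmainR : (∏ p ∈ n.primeFactors, (p:ℝ)) * (T:ℝ)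
      ≤ ((k:ℝ)+1) ^ n.primeFactors.card * (n:ℝ) := by
    have h9 := (Nat.cast_le (α := ℝ)).mpr hmain
    push_cast at h9
    exact h9
  have hexp : (n:ℝ) ≤ (n:ℝ) ^ ((2*(k:ℝ))/((k:ℝ)+1)) := by
    have h1n : (1:ℝ) ≤ (n:ℝ) := by exact_mod_cast hn0
    calc (n:ℝ) = (n:ℝ) ^ (1:ℝ) := (Real.rpow_one _).symm
      _ ≤ (n:ℝ) ^ ((2*(k:ℝ))/((k:ℝ)+1)) := by
          apply Real.rpow_le_rpow_of_exponent_le h1n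
          rw [le_div_iff₀ (by positivity)]
          have hk1 : (1:ℝ) ≤ (k:ℝ) := by exact_mod_cast hk
          nlinarith
  rw [div_mul_eq_mul_div, le_div_iff₀ hProd_pos]
  calc (T:ℝ) * ∏ p ∈ n.primeFactors, (p:ℝ)
      = (∏ p ∈ n.primeFactors, (p:ℝ)) * (T:ℝ) := by ring
    _ ≤ ((k:ℝ)+1) ^ n.primeFactors.card * (n:ℝ) := hmainR
    _ ≤ ((k:ℝ)+1) ^ n.primeFactors.card * (n:ℝ) ^ ((2*(k:ℝ))/((k:ℝ)+1)) := by
        apply mul_le_mul_of_nonneg_left hexp (by positivity)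
    _ = (k + 1 : ℝ) ^ n.primeFactors.card * (n:ℝ) ^ ((2*(k:ℝ))/((k:ℝ)+1)) := by norm_num
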